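/- Let H and K be complex Hilbert spaces, M a *-subalgebra of B(H), N a C*-subalgebra of B(K), Ω ∈ H a unit vector cyclic for M, Λ ∈ K a unit vector, μ(a) = ⟨Ω, aΩ⟩, ν(b) = ⟨Λ, bΛ⟩, and η : M → N a positive linear map with ν ∘ η = μ, with dual η′ : N′ → M′ determined by ⟨Ω, a η′(b′) Ω⟩ = ⟨Λ, η(a) b′ Λ⟩ for all a ∈ M, b′ ∈ N′. If η is n-positive for some n (i.e. the entrywise application of η to the n×n matrix algebra over M maps positive elements to positive elements), then η′ is n-positive as well. In particular, if η is completely positive (n-positive for every n), then η′ is completely positive. -/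

import Mathlib

open scoped ComplexOrder

set_option synthInstance.maxHeartbeats 1000000
set_option maxHeartbeats 2000000

noncomputable section

variable {H K : Type} [NormedAddCommGroup H] [InnerProductSpace ℂ H] [CompleteSpace H]
  [NormedAddCommGroup K] [InnerProductSpace ℂ K] [CompleteSpace K]

/-- The commutant of a (not necessarily unital) *-subalgebra of `B(H)`, as a unital
star subalgebra of `B(H)`. For a star-closed set this is the usual commutant. -/
def commutantOf {H : Type} [NormedAddCommGroup H] [InnerProductSpace ℂ H] [CompleteSpace H]
    (M : NonUnitalStarSubalgebra ℂ (H →L[ℂ] H)) : StarSubalgebra ℂ (H →L[ℂ] H) :=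
  StarSubalgebra.centralizer ℂ (M : Set (H →L[ℂ] H))

/-- Positivity of an `n × n` matrix of operators, regarded as an operator on `H ⊕ ⋯ ⊕ H`. -/
def MatPos {n : ℕ} (x : Fin n → Fin n → (H →L[ℂ] H)) : Prop :=
  ∀ ξ : Fin n → H, 0 ≤ ∑ i, ∑ j, (inner ℂ (ξ i) (x i j (ξ j)) : ℂ)

/-- The defining property of the dual map `η′ : N′ → M′` of `η : M → N`:
`⟨Ω, a η′(b′) Ω⟩ = ⟨Λ, η(a) b′ Λ⟩` for all `a ∈ M`, `b′ ∈ N′`. -/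
def IsDualOf (M : NonUnitalStarSubalgebra ℂ (H →L[ℂ] H))
    (N : NonUnitalStarSubalgebra ℂ (K →L[ℂ] K)) (Ω : H) (Λ : K)
    (η : ↥M → ↥N) (f : ↥(commutantOf N) → ↥(commutantOf M)) : Prop :=
  ∀ (a : ↥M) (b' : ↥(commutantOf N)),
    (inner ℂ Ω ((a : H →L[ℂ] H) ((f b' : H →L[ℂ] H) Ω)) : ℂ)
      = inner ℂ Λ ((η a : K →L[ℂ] K) ((b' : K →L[ℂ] K) Λ))

/-! ### Auxiliary lemmas -/

section CommuteCfc

lemma commute_elem_aux {A : Type*} [CStarAlgebra A] {a b u : A}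
    (h : Commute b a) (hs : Commute b (star a)) (hu : u ∈ StarAlgebra.elemental ℂ a) :
    Commute b u := by
  induction hu using StarAlgebra.elemental.induction_on with
  | self => exact h
  | star_self => exact hs
  | algebraMap r => exact (Algebra.commutes r b).symm
  | add u hu v hv h1 h2 => exact h1.add_right h2
  | mul u hu v hv h1 h2 => exact h1.mul_right h2
  | closure s hsub hP v hv =>
      exact closure_minimal (fun x hx => hP x hx)
        (isClosed_eq (continuous_mul_left b) (continuous_mul_right b)) hv

lemma commute_cfc_aux {A : Type*} [CStarAlgebra A] {a b : A} (ha : IsStarNormal a)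
    (h : Commute b a) (hs : Commute b (star a)) (f : ℂ → ℂ) :
    Commute b (cfc f a) := by
  by_cases hf : ContinuousOn f (spectrum ℂ a)
  · have hmem : cfc f a ∈ StarAlgebra.elemental ℂ a := by
      rw [cfc_apply f a ha hf, cfcHom_eq_of_isStarNormal]
      exact SetLike.coe_mem _
    exact commute_elem_aux h hs hmem
  · rw [cfc_apply_of_not_continuousOn a hf]
    exact Commute.zero_right b

lemma commute_cfcsqrt_aux {E : Type} [NormedAddCommGroup E] [InnerProductSpace ℂ E]
    [CompleteSpace E] {a b : E →L[ℂ] E} (ha : 0 ≤ a) (h : Commute b a) :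
    Commute b (CFC.sqrt a) := by
  have hsa : IsSelfAdjoint a := .of_nonneg ha
  rw [CFC.sqrt_eq_cfc, cfc_nnreal_eq_real NNReal.sqrt a ha, cfc_real_eq_complex _ hsa]
  exact commute_cfc_aux hsa.isStarNormal h (by rwa [hsa.star_eq]) _

end CommuteCfc

section Blocks

variable {n : ℕ}

/-- `H ⊕ ⋯ ⊕ H` as a Hilbert space. -/
abbrev PiK (K : Type) [NormedAddCommGroup K] [InnerProductSpace ℂ K] (n : ℕ) : Type :=
  PiLp 2 (fun _ : Fin n => K)

instance piK_completeSpace [CompleteSpace K] : CompleteSpace (PiK K n) :=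
  inferInstance

def prjK (i : Fin n) : PiK K n →L[ℂ] K :=
  (ContinuousLinearMap.proj i).comp
    (PiLp.continuousLinearEquiv 2 ℂ (fun _ : Fin n => K) : PiK K n →L[ℂ] (Fin n → K))

def sglK (i : Fin n) : K →L[ℂ] PiK K n :=
  ((PiLp.continuousLinearEquiv 2 ℂ (fun _ : Fin n => K)).symm :
      (Fin n → K) →L[ℂ] PiK K n).comp
    (ContinuousLinearMap.pi fun j => if j = i then ContinuousLinearMap.id ℂ K else 0)

omit [CompleteSpace K] in
lemma prjK_apply (i : Fin n) (v : PiK K n) : prjK i v = v i := rfl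

omit [CompleteSpace K] in
lemma sglK_apply (i j : Fin n) (ξ : K) : (sglK i ξ) j = if j = i then ξ else 0 := by
  show (ContinuousLinearMap.pi fun j => if j = i then ContinuousLinearMap.id ℂ K else 0) ξ j = _
  rw [ContinuousLinearMap.pi_apply]
  split_ifs <;> simp

omit [CompleteSpace K] in
lemma piK_ext {v w : PiK K n} (h : ∀ m, v m = w m) : v = w := congrArg (WithLp.toLp 2) (funext h)

omit [CompleteSpace K] in
lemma piK_sum_apply {s : Finset (Fin n)} (f : Fin n → PiK K n) (m : Fin n) :
    (∑ k ∈ s, f k) m = ∑ k ∈ s, f k m := by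
  rw [WithLp.ofLp_sum, Finset.sum_apply]

omit [CompleteSpace K] in
lemma sum_sglK (v : PiK K n) : ∑ k, sglK k (v k) = v := by
  refine piK_ext fun m => ?_
  rw [piK_sum_apply]
  simp [sglK_apply]

def blkK (y : Fin n → Fin n → (K →L[ℂ] K)) : PiK K n →L[ℂ] PiK K n :=
  ∑ i, ∑ j, (sglK i).comp ((y i j).comp (prjK j))

omit [CompleteSpace K] in
lemma blkK_apply (y : Fin n → Fin n → (K →L[ℂ] K)) (v : PiK K n) (m : Fin n) :
    (blkK y v) m = ∑ j, y m j (v j) := by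
  have h1 : blkK y v = ∑ i, ∑ j, sglK i (y i j (v j)) := by
    simp [blkK, ContinuousLinearMap.sum_apply]
    rfl
  rw [h1]
  rw [piK_sum_apply]
  have : ∀ i, (∑ j, sglK i (y i j (v j)) : PiK K n) m = ∑ j, (sglK i (y i j (v j)) : PiK K n) m :=
    fun i => piK_sum_apply _ m
  simp only [this, sglK_apply]
  rw [Finset.sum_comm]
  simp [Finset.sum_ite_eq]

omit [CompleteSpace K] in
lemma inner_blkK (y : Fin n → Fin n → (K →L[ℂ] K)) (v w : PiK K n) :
    (inner ℂ v (blkK y w) : ℂ) = ∑ i, ∑ j, (inner ℂ (v i) (y i j (w j)) : ℂ) := by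
  rw [PiLp.inner_apply]
  exact Finset.sum_congr rfl fun i _ => by rw [blkK_apply, inner_sum]

omit [CompleteSpace K] in
lemma inner_sglK_left (i : Fin n) (ξ : K) (w : PiK K n) :
    (inner ℂ (sglK i ξ) w : ℂ) = inner ℂ ξ (w i) := by
  rw [PiLp.inner_apply]
  rw [Finset.sum_eq_single i]
  · rw [sglK_apply]; simp
  · intro b _ hb; rw [sglK_apply]; simp [hb]
  · simp

omit [CompleteSpace K] in
lemma inner_sglK_right (i : Fin n) (ξ : K) (w : PiK K n) :
    (inner ℂ w (sglK i ξ) : ℂ) = inner ℂ (w i) ξ := by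
  rw [PiLp.inner_apply]
  rw [Finset.sum_eq_single i]
  · rw [sglK_apply]; simp
  · intro b _ hb; rw [sglK_apply]; simp [hb]
  · simp

lemma blkK_nonneg (y : Fin n → Fin n → (K →L[ℂ] K))
    (h : ∀ v : PiK K n, 0 ≤ (inner ℂ v (blkK y v) : ℂ)) : 0 ≤ blkK y := by
  rw [ContinuousLinearMap.nonneg_iff_isPositive, ContinuousLinearMap.isPositive_iff_complex]
  intro xv
  obtain ⟨h1, h2⟩ := Complex.nonneg_iff.mp (h xv)
  have hconj : (inner ℂ (blkK y xv) xv : ℂ) = (starRingEnd ℂ) (inner ℂ xv (blkK y xv)) :=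
    (inner_conj_symm _ _).symm
  have him : (inner ℂ xv (blkK y xv) : ℂ).im = 0 := h2.symm
  have heq : (inner ℂ (blkK y xv) xv : ℂ) = inner ℂ xv (blkK y xv) := by
    rw [hconj, Complex.conj_eq_iff_im.mpr him]
  constructor
  · rw [heq]
    exact Complex.conj_eq_iff_re.mp (Complex.conj_eq_iff_im.mpr him)
  · rw [heq]
    exact h1

/-- Block diagonal operator. -/
def diagK (c : K →L[ℂ] K) : PiK K n →L[ℂ] PiK K n :=
  blkK fun i j => if i = j then c else 0

omit [CompleteSpace K] in
lemma diagK_apply (c : K →L[ℂ] K) (v : PiK K n) (m : Fin n) :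
    (diagK c v) m = c (v m) := by
  rw [diagK, blkK_apply]
  rw [Finset.sum_eq_single m]
  · simp
  · intro b _ hb
    simp [Ne.symm hb]
  · simp

omit [CompleteSpace K] in
lemma diagK_sglK (c : K →L[ℂ] K) (j : Fin n) (ζ : K) :
    diagK (n := n) c (sglK j ζ) = sglK j (c ζ) := by
  refine piK_ext fun m => ?_
  rw [diagK_apply, sglK_apply, sglK_apply]
  split_ifs <;> simp

end Blocks

/-- If the positive map `η` (with `ν ∘ η = μ`) is `n`-positive, then so
is its dual `η′ : N′ → M′`.  (In particular, if `η` is completely positive then so is `η′`,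
since this holds for every `n`.) -/
theorem dual_map_nPositive
    (M : NonUnitalStarSubalgebra ℂ (H →L[ℂ] H)) (N : NonUnitalStarSubalgebra ℂ (K →L[ℂ] K))
    (hNclosed : IsClosed (N : Set (K →L[ℂ] K)))
    (Ω : H) (Λ : K) (hΩunit : ‖Ω‖ = 1) (hΛunit : ‖Λ‖ = 1)
    (hΩcyc : Dense (Set.range fun a : ↥M => (a : H →L[ℂ] H) Ω))
    (η : ↥M → ↥N) (hηlin : IsLinearMap ℂ η)
    (hηpos : ∀ a : ↥M, (∀ ξ : H, 0 ≤ (inner ℂ ξ ((a : H →L[ℂ] H) ξ) : ℂ)) →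
      ∀ ξ : K, 0 ≤ (inner ℂ ξ ((η a : K →L[ℂ] K) ξ) : ℂ))
    (hstate : ∀ a : ↥M,
      (inner ℂ Λ ((η a : K →L[ℂ] K) Λ) : ℂ) = inner ℂ Ω ((a : H →L[ℂ] H) Ω))
    (η' : ↥(commutantOf N) → ↥(commutantOf M)) (hη' : IsDualOf M N Ω Λ η η')
    (n : ℕ)
    (hn : ∀ x : Fin n → Fin n → ↥M,
      MatPos (fun i j => (x i j : H →L[ℂ] H)) → MatPos (fun i j => (η (x i j) : K →L[ℂ] K))) :
    ∀ y : Fin n → Fin n → ↥(commutantOf N),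
      MatPos (fun i j => (y i j : K →L[ℂ] K)) →
        MatPos (fun i j => (η' (y i j) : H →L[ℂ] H)) := by
  intro y hy
  -- the quadratic form associated to the matrix `η' y`
  set g : (Fin n → H) → ℂ :=
    fun ξ => ∑ i, ∑ j, (inner ℂ (ξ i) ((η' (y i j) : H →L[ℂ] H) (ξ j)) : ℂ) with hg
  -- Step 1: positive square root of the block operator of `y`, with entries commuting with `N`.
  set Y : PiK K n →L[ℂ] PiK K n := blkK fun i j => ((y i j : K →L[ℂ] K)) with hYdef
  have hY : 0 ≤ Y := blkK_nonneg _ fun v => by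
    rw [inner_blkK]; exact hy v
  set Z : PiK K n →L[ℂ] PiK K n := CFC.sqrt Y with hZdef
  have hZnn : (0 : PiK K n →L[ℂ] PiK K n) ≤ Z := CFC.sqrt_nonneg Y
  have hZsa : IsSelfAdjoint Z := .of_nonneg hZnn
  have hZZ : Z * Z = Y := CFC.sqrt_mul_sqrt_self Y hY
  set z : Fin n → Fin n → (K →L[ℂ] K) := fun i j => (prjK i).comp (Z.comp (sglK j)) with hzdef
  -- commutation of `Z` with block-diagonal operators from `N`
  have hYc : ∀ c ∈ N, Commute (diagK (n := n) c) Y := by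
    intro c hc
    have hentry : ∀ i j, c * ((y i j : K →L[ℂ] K)) = ((y i j : K →L[ℂ] K)) * c := fun i j =>
      (((StarSubalgebra.mem_centralizer_iff ℂ).mp (y i j).2) c hc).1
    refine ContinuousLinearMap.ext fun v => piK_ext fun m => ?_
    show (diagK c (Y v)) m = (Y (diagK c v)) m
    rw [diagK_apply, hYdef, blkK_apply, blkK_apply, map_sum]
    refine Finset.sum_congr rfl fun j _ => ?_
    rw [diagK_apply]
    have := congrFun (congrArg (fun (T : K →L[ℂ] K) => (T : K → K)) (hentry m j)) (v j)
    simpa using this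
  have hZc : ∀ c ∈ N, Commute (diagK (n := n) c) Z := fun c hc =>
    commute_cfcsqrt_aux hY (hYc c hc)
  -- entrywise commutation
  have hzc : ∀ i j : Fin n, ∀ c ∈ N, ∀ w : K, c (z i j w) = z i j (c w) := by
    intro i j c hc w
    have h1 : z i j (c w) = prjK i (Z (diagK c (sglK j w))) := by
      rw [diagK_sglK]; rfl
    have h2 : Z (diagK c (sglK j w)) = diagK c (Z (sglK j w)) := by
      have := congrFun (congrArg (fun (T : PiK K n →L[ℂ] PiK K n) => (T : PiK K n → PiK K n))
        (hZc c hc).symm) (sglK j w)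
      simpa using this
    rw [h1, h2, prjK_apply, diagK_apply]
    rfl
  -- swap lemma for entries of the self-adjoint `Z`
  have hzswap : ∀ i j : Fin n, ∀ ξ ζ : K,
      (inner ℂ ξ (z i j ζ) : ℂ) = inner ℂ (z j i ξ) ζ := by
    intro i j ξ ζ
    have hsym := (ContinuousLinearMap.isSelfAdjoint_iff_isSymmetric.mp hZsa)
    calc (inner ℂ ξ (z i j ζ) : ℂ)
        = inner ℂ (sglK i ξ) (Z (sglK j ζ)) := by rw [inner_sglK_left]; rfl
      _ = inner ℂ (Z (sglK i ξ)) (sglK j ζ) := (hsym (sglK i ξ) (sglK j ζ)).symm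
      _ = inner ℂ (z j i ξ) ζ := by rw [inner_sglK_right]; rfl
  -- coordinates of `Z`
  have hZcoord : ∀ (w : PiK K n) (i : Fin n), (Z w) i = ∑ m, z i m (w m) := by
    intro w i
    conv_lhs => rw [← sum_sglK w]
    rw [map_sum, piK_sum_apply]
    rfl
  -- entries of `Y` in terms of entries of `Z`
  have hYent : ∀ i j : Fin n, ∀ ζ : K,
      ((y i j : K →L[ℂ] K)) ζ = ∑ m, z i m (z m j ζ) := by
    intro i j ζ
    have h1 : ((y i j : K →L[ℂ] K)) ζ = (Y (sglK j ζ)) i := by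
      rw [hYdef, blkK_apply]
      rw [Finset.sum_eq_single j]
      · rw [sglK_apply]; simp
      · intro b _ hb; rw [sglK_apply]; simp [hb]
      · simp
    rw [h1, ← hZZ]
    have h2 : ((Z * Z) (sglK j ζ) : PiK K n) = Z (Z (sglK j ζ)) := rfl
    rw [h2, hZcoord]
    exact Finset.sum_congr rfl fun m _ => rfl
  -- Step 2: positivity of `g` on vectors of the form `(a i) Ω`.
  have hpos_cyc : ∀ a : Fin n → ↥M, 0 ≤ g fun i => (a i : H →L[ℂ] H) Ω := by
    intro a
    set x : Fin n → Fin n → ↥M := fun i j => star (a i) * a j with hx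
    have hxpos : MatPos fun i j => ((x i j : H →L[ℂ] H)) := by
      intro ζ
      have hterm : ∀ i j, (inner ℂ (ζ i) (((x i j : H →L[ℂ] H)) (ζ j)) : ℂ)
          = inner ℂ ((a i : H →L[ℂ] H) (ζ i)) ((a j : H →L[ℂ] H) (ζ j)) := by
        intro i j
        have : ((x i j : H →L[ℂ] H)) (ζ j)
            = ContinuousLinearMap.adjoint ((a i : H →L[ℂ] H)) ((a j : H →L[ℂ] H) (ζ j)) := by
          rw [hx]
          show ((star (a i) * a j : ↥M) : H →L[ℂ] H) (ζ j) = _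
          rw [MulMemClass.coe_mul]
          rfl
        rw [this, ContinuousLinearMap.adjoint_inner_right]
      calc (0 : ℂ) ≤ inner ℂ (∑ i, (a i : H →L[ℂ] H) (ζ i)) (∑ j, (a j : H →L[ℂ] H) (ζ j)) := by
            have hn0 : (inner ℂ (∑ i, (a i : H →L[ℂ] H) (ζ i)) (∑ i, (a i : H →L[ℂ] H) (ζ i)) : ℂ)
                = ((‖∑ i, (a i : H →L[ℂ] H) (ζ i)‖ : ℝ) : ℂ) ^ 2 :=
              @inner_self_eq_norm_sq_to_K ℂ _ _ _ _ _
            rw [hn0, ← Complex.ofReal_pow, Complex.nonneg_iff]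
            constructor
            · rw [Complex.ofReal_re]
              exact sq_nonneg _
            · rw [Complex.ofReal_im]
        _ = ∑ i, ∑ j, (inner ℂ (ζ i) (((x i j : H →L[ℂ] H)) (ζ j)) : ℂ) := by
            rw [sum_inner]
            refine Finset.sum_congr rfl fun i _ => ?_
            rw [inner_sum]
            exact Finset.sum_congr rfl fun j _ => (hterm i j).symm
    have hb := hn x hxpos
    -- rewrite each term using the dual property
    have hterm : ∀ i j, (inner ℂ ((a i : H →L[ℂ] H) Ω)
        ((η' (y i j) : H →L[ℂ] H) ((a j : H →L[ℂ] H) Ω)) : ℂ)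
        = inner ℂ Λ ((η (x i j) : K →L[ℂ] K) ((y i j : K →L[ℂ] K) Λ)) := by
      intro i j
      have hcommF : ((a j : H →L[ℂ] H)) * ((η' (y i j) : H →L[ℂ] H))
          = ((η' (y i j) : H →L[ℂ] H)) * ((a j : H →L[ℂ] H)) :=
        (((StarSubalgebra.mem_centralizer_iff ℂ).mp (η' (y i j)).2) _ (a j).2).1
      have h1 : ((η' (y i j) : H →L[ℂ] H)) ((a j : H →L[ℂ] H) Ω)
          = (a j : H →L[ℂ] H) ((η' (y i j) : H →L[ℂ] H) Ω) := by
        have := congrFun (congrArg (fun (T : H →L[ℂ] H) => (T : H → H)) hcommF.symm) Ω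
        simpa using this
      rw [h1, ← ContinuousLinearMap.adjoint_inner_right]
      have h2 : ContinuousLinearMap.adjoint ((a i : H →L[ℂ] H))
            ((a j : H →L[ℂ] H) ((η' (y i j) : H →L[ℂ] H) Ω))
          = ((x i j : H →L[ℂ] H)) ((η' (y i j) : H →L[ℂ] H) Ω) := by
        rw [hx]
        show _ = ((star (a i) * a j : ↥M) : H →L[ℂ] H) _
        rw [MulMemClass.coe_mul]
        rfl
      rw [h2]
      exact hη' (x i j) (y i j)
    rw [hg]
    simp only [hterm]
    -- now use the square-root decomposition
    have hterm2 : ∀ i j, (inner ℂ Λ ((η (x i j) : K →L[ℂ] K) ((y i j : K →L[ℂ] K) Λ)) : ℂ)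
        = ∑ m, inner ℂ ((z m i) Λ) ((η (x i j) : K →L[ℂ] K) ((z m j) Λ)) := by
      intro i j
      rw [hYent i j Λ, map_sum, inner_sum]
      refine Finset.sum_congr rfl fun m _ => ?_
      rw [hzc i m _ (η (x i j)).2 (z m j Λ), hzswap i m]
    simp only [hterm2]
    have : ∀ m ∈ Finset.univ, (0:ℂ) ≤ ∑ i, ∑ j,
        (inner ℂ ((z m i) Λ) ((η (x i j) : K →L[ℂ] K) ((z m j) Λ)) : ℂ) := by
      intro m _
      have := hb fun i => z m i Λ
      simpa using this
    calc (0:ℂ) ≤ ∑ m, ∑ i, ∑ j,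
          (inner ℂ ((z m i) Λ) ((η (x i j) : K →L[ℂ] K) ((z m j) Λ)) : ℂ) :=
        Finset.sum_nonneg this
      _ = ∑ i, ∑ m, ∑ j,
          (inner ℂ ((z m i) Λ) ((η (x i j) : K →L[ℂ] K) ((z m j) Λ)) : ℂ) := Finset.sum_comm
      _ = ∑ i, ∑ j, ∑ m,
          (inner ℂ ((z m i) Λ) ((η (x i j) : K →L[ℂ] K) ((z m j) Λ)) : ℂ) :=
        Finset.sum_congr rfl fun i _ => Finset.sum_comm
  -- Step 3: density and continuity
  have hcont : Continuous g := by
    apply continuous_finset_sum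
    intro i _
    apply continuous_finset_sum
    intro j _
    exact Continuous.inner (continuous_apply i)
      ((η' (y i j) : H →L[ℂ] H).continuous.comp (continuous_apply j))
  have hclosed : IsClosed {ξ : Fin n → H | 0 ≤ g ξ} := by
    have h1 : {z : ℂ | 0 ≤ z} = Complex.re ⁻¹' Set.Ici 0 ∩ Complex.im ⁻¹' {0} := by
      ext w
      simp [Complex.nonneg_iff, eq_comm]
    have h2 : IsClosed {z : ℂ | 0 ≤ z} := by
      rw [h1]
      exact (isClosed_Ici.preimage Complex.continuous_re).inter
        (isClosed_singleton.preimage Complex.continuous_im)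
    exact h2.preimage hcont
  intro ξ
  have hdense : Dense (Set.pi Set.univ fun _ : Fin n =>
      Set.range fun a : ↥M => (a : H →L[ℂ] H) Ω) :=
    dense_pi Set.univ fun _ _ => hΩcyc
  have hsubset : (Set.pi Set.univ fun _ : Fin n =>
      Set.range fun a : ↥M => (a : H →L[ℂ] H) Ω) ⊆ {ξ : Fin n → H | 0 ≤ g ξ} := by
    intro ζ hζ
    choose a ha using fun i => hζ i (Set.mem_univ i)
    have : ζ = fun i => (a i : H →L[ℂ] H) Ω := funext fun i => (ha i).symm
    rw [Set.mem_setOf_eq, this]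
    exact hpos_cyc a
  have : (Set.univ : Set (Fin n → H)) ⊆ {ξ : Fin n → H | 0 ≤ g ξ} := by
    rw [← hdense.closure_eq]
    exact closure_minimal hsubset hclosed
  exact this (Set.mem_univ ξ)
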